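/- Suppose rational numbers satisfy the following, arising from a curve C with C² = -5/2 on a surface Y mapping to Z = P(1,2,3): C_Z ∼ nL with -K_Z ∼ 6L, L² = 1/6, ψ*C_Z = C + αE where E² = -1/4, -K_Y·E = 1/2, -K_Y·C = -1, and -K_Y·ψ*C_Z = -K_Z·C_Z = n. Then α = 2(n+1), and the equation (ψ*C_Z)² computed two ways gives 5n² + 12n - 9 = 0, which has no integer solutions n ≥ 0. -/
import Mathlib

/-- Case 17-6: from `n = -1 + α/2` and `n²/6 = -5/2 + α²/4` one gets
`α = 2(n+1)` and `5n² + 12n - 9 = 0`, which has no nonnegative integer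
solution — a contradiction. -/
theorem stmt_12 (n : ℤ) (hn : 0 ≤ n) (α : ℚ)
    (hα : (n : ℚ) = -1 + α * (1 / 2))
    (hsq : (n : ℚ) ^ 2 / 6 = -5 / 2 + α ^ 2 / 4) :
    α = 2 * ((n : ℚ) + 1) ∧ 5 * (n : ℚ) ^ 2 + 12 * (n : ℚ) - 9 = 0 ∧ False := by
  have h1 : α = 2 * ((n : ℚ) + 1) := by linarith
  have h2 : 5 * (n : ℚ) ^ 2 + 12 * (n : ℚ) - 9 = 0 := by
    subst h1; nlinarith [hsq]
  refine ⟨h1, h2, ?_⟩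
  have h3 : 5 * n ^ 2 + 12 * n - 9 = 0 := by exact_mod_cast h2
  rcases (by omega : n = 0 ∨ 1 ≤ n) with h | h
  · omega
  · nlinarith
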